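/- The tree language L_{γγ} = {σ(γⁿ#, γⁿ#) | n ∈ ℕ} over Σ = {σ⁽²⁾, γ⁽¹⁾, #⁽⁰⁾} is not recognizable by any non-global Parikh tree automaton (of any dimension). -/

import Mathlib

/-! ## Trees over ranked alphabets: a symbol `s` has `ar s` children -/

inductive GTree (S : Type) (ar : S → ℕ) : Type where
  | node (s : S) (c : Fin (ar s) → GTree S ar) : GTree S ar

namespace GTree
variable {S : Type} {ar : S → ℕ}

/-- The height of a tree (leaves have height 0). -/
def height : GTree S ar → ℕ
  | node _ c => Finset.univ.sup fun i => height (c i) + 1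

/-- The size (number of positions) of a tree. -/
def size : GTree S ar → ℕ
  | node _ c => 1 + ∑ i, size (c i)

/-- The subtree at a position (a list of child indices), if the position exists. -/
def subAt : GTree S ar → List ℕ → Option (GTree S ar)
  | t, [] => some t
  | node s c, i :: ρ => if h : i < ar s then subAt (c ⟨i, h⟩) ρ else none

/-- The list of path words of all complete (root-to-leaf) paths. -/
def pathWords : GTree S ar → List (List S)
  | node s c =>
    if _ : ar s = 0 then [[s]]
    else ((List.finRange (ar s)).map fun i => (pathWords (c i)).map (s :: ·)).flatten

end GTree

/-! ## Semilinear sets -/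

def IsLinearSetFin {m : ℕ} (C : Set (Fin m → ℕ)) : Prop :=
  ∃ (l : ℕ) (d0 : Fin m → ℕ) (d : Fin l → Fin m → ℕ),
    C = {v | ∃ c : Fin l → ℕ, v = d0 + ∑ i, c i • d i}

def IsSemilinear {m : ℕ} (C : Set (Fin m → ℕ)) : Prop :=
  ∃ (k : ℕ) (L : Fin k → Set (Fin m → ℕ)), (∀ i, IsLinearSetFin (L i)) ∧ C = ⋃ i, L i

/-! ## Non-global Parikh tree automata (PTA) -/

structure PTA (S : Type) (ar : S → ℕ) (m : ℕ) where
  Q : Type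
  finQ : Fintype Q
  init : Q
  D : Finset (Fin m → ℕ)
  trans : Q → (s : S) → (Fin (ar s) → Q × (Fin m → ℕ)) → Prop
  transD : ∀ q s f, trans q s f → ∀ i, (f i).2 ∈ D
  C : Set (Fin m → ℕ)
  semiC : IsSemilinear C

/-- `A.Acc q w ξ` : starting in configuration `(q, w)`, the automaton `A` can compute
the tree `ξ`, adding counter vectors pathwise; a nullary transition additionally
requires the current counter vector to lie in `A.C`. -/
inductive PTA.Acc {S : Type} {ar : S → ℕ} {m : ℕ} (A : PTA S ar m) :
    A.Q → (Fin m → ℕ) → GTree S ar → Prop where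
  | node {q : A.Q} {w : Fin m → ℕ} {s : S} {f : Fin (ar s) → A.Q × (Fin m → ℕ)}
      {c : Fin (ar s) → GTree S ar}
      (ht : A.trans q s f) (hC : ar s = 0 → w ∈ A.C)
      (hc : ∀ i, PTA.Acc A (f i).1 (w + (f i).2) (c i)) :
      PTA.Acc A q w (.node s c)

def PTA.Lang {S : Type} {ar : S → ℕ} {m : ℕ} (A : PTA S ar m) : Set (GTree S ar) :=
  {ξ | A.Acc A.init 0 ξ}

/-! ## The ranked alphabet {σ⁽²⁾, γ⁽¹⁾, #⁽⁰⁾} -/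

inductive Sg : Type where | sig | gam | hash
  deriving DecidableEq

def arG : Sg → ℕ
  | .sig => 2
  | .gam => 1
  | .hash => 0

instance : Fintype Sg :=
  ⟨⟨{Sg.sig, Sg.gam, Sg.hash}, by decide⟩, fun x => by cases x <;> decide⟩

def hashT : GTree Sg arG := .node .hash ![]
def gamT (t : GTree Sg arG) : GTree Sg arG := .node .gam ![t]
def sigT (l r : GTree Sg arG) : GTree Sg arG := .node .sig ![l, r]

/-- γⁿ(t) -/
def gpow : ℕ → GTree Sg arG → GTree Sg arG
  | 0, t => t
  | n + 1, t => gamT (gpow n t)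

/-- L_γγ = {σ(γⁿ#, γⁿ#) | n ∈ ℕ} -/
def Lgg : Set (GTree Sg arG) := {ξ | ∃ n, ξ = sigT (gpow n hashT) (gpow n hashT)}

/-- L₃ = {γⁿ(σ(γⁿ#, γⁿ#)) | n ∈ ℕ} -/
def L3 : Set (GTree Sg arG) := {ξ | ∃ n, ξ = gpow n (sigT (gpow n hashT) (gpow n hashT))}

/-! The tree language L_γγ = {σ(γⁿ#, γⁿ#) | n ∈ ℕ} is not recognizable by any
non-global Parikh tree automaton, of any dimension. -/

lemma gpow_height (n : ℕ) : (gpow n hashT).height = n := by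
  induction n with
  | zero => simp [gpow, hashT, GTree.height, arG]
  | succ n ih => simp [gpow, gamT, GTree.height, arG, ih]; exact Finset.sup_const Finset.univ_nonempty _

theorem Lgg_not_PTA_recognizable :
    ¬ ∃ (m : ℕ) (A : PTA Sg arG m), A.Lang = Lgg := by
  rintro ⟨m, A, hL⟩
  haveI := A.finQ
  have hacc : ∀ n : ℕ, A.Acc A.init 0 (sigT (gpow n hashT) (gpow n hashT)) := by
    intro n
    have : sigT (gpow n hashT) (gpow n hashT) ∈ Lgg := ⟨n, rfl⟩
    rw [← hL] at this; exact this
  have key : ∀ n : ℕ, ∃ f : Fin (arG Sg.sig) → A.Q × (Fin m → ℕ),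
      (∀ i, (f i).2 ∈ A.D) ∧ A.trans A.init Sg.sig f ∧
      ∀ i, A.Acc (f i).1 (0 + (f i).2) (gpow n hashT) := by
    intro n
    have h := hacc n
    cases h with
    | node ht hC hc =>
      refine ⟨_, fun i => A.transD _ _ _ ht i, ht, fun i => ?_⟩
      have h2 : (![gpow n hashT, gpow n hashT] : Fin (arG Sg.sig) → _) i
          = gpow n hashT := by fin_cases i <;> rfl
      have := hc i
      rwa [h2] at this
  choose F hFD hFt hF using key
  set G : ℕ → (Fin (arG Sg.sig) → A.Q × {v : Fin m → ℕ // v ∈ A.D}) :=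
    fun n i => ((F n i).1, ⟨(F n i).2, hFD n i⟩) with hGdef
  obtain ⟨n, k, hne, hG⟩ := Finite.exists_ne_map_eq_of_infinite G
  have hFeq : F n = F k := by
    funext i
    have := congrFun hG i
    simp only [hGdef, Prod.mk.injEq, Subtype.mk.injEq] at this
    exact Prod.ext this.1 this.2
  have hmix : A.Acc A.init 0 (GTree.node Sg.sig ![gpow n hashT, gpow k hashT]) := by
    refine PTA.Acc.node (hFt n) (by intro h; exact absurd h (by decide)) ?_
    intro i
    fin_cases i
    · exact hF n _
    · rw [hFeq]; exact hF k _
  have hmem : GTree.node Sg.sig ![gpow n hashT, gpow k hashT] ∈ Lgg := by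
    rw [← hL]; exact hmix
  obtain ⟨j, hj⟩ := hmem
  have h0 := congrArg (fun t => GTree.subAt t [0]) hj
  have h1 := congrArg (fun t => GTree.subAt t [1]) hj
  simp [GTree.subAt, sigT, arG] at h0 h1
  have hn : n = j := by
    have := congrArg GTree.height h0
    rwa [gpow_height, gpow_height] at this
  have hk : k = j := by
    have := congrArg GTree.height h1
    rwa [gpow_height, gpow_height] at this
  exact hne (hn.trans hk.symm)
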